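/- Let D_0 be a nonempty, nontrivial (r,s)-robust digraph, and let D_0, D_1, …, D_K be a sequence of digraphs in which each D_{k+1} is obtained from D_k by adding one new vertex together with directed edges incident to it such that the new vertex has at least r + s − 1 in-neighbors among the vertices of D_k. Then D_k is (r,s)-robust for every k = 0, 1, …, K. In particular, growing a network by preferential attachment, where each newly attached node receives incoming edges from at least r + s − 1 existing nodes, preserves (r,s)-robustness. -/

import Mathlib

/-- The in-neighbors of node `i` in the digraph with edge set `E`:
`V_i = {j : (j, i) ∈ E}`. -/
def inNbrs {V : Type*} [Fintype V] [DecidableEq V] (E : Finset (V × V)) (i : V) : Finset V :=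
  Finset.univ.filter (fun j => (j, i) ∈ E)

/-- `X_S = {i ∈ S : |V_i \ S| ≥ r}`, the set of nodes of `S` with at least `r`
in-neighbors outside of `S`. -/
def reachSet {V : Type*} [Fintype V] [DecidableEq V] (E : Finset (V × V)) (r : ℕ)
    (S : Finset V) : Finset V :=
  S.filter (fun i => r ≤ ((inNbrs E i) \ S).card)

/-- `(r,s)`-robustness of the digraph with edge set `E`. -/
def RSRobust {V : Type*} [Fintype V] [DecidableEq V] (E : Finset (V × V)) (r s : ℕ) : Prop :=
  ∀ S1 S2 : Finset V, S1.Nonempty → S2.Nonempty → Disjoint S1 S2 →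
    (reachSet E r S1).card = S1.card ∨ (reachSet E r S2).card = S2.card ∨
    s ≤ (reachSet E r S1).card + (reachSet E r S2).card

namespace Stmt19Aux

variable {n r s : ℕ}

lemma mem_inNbrs {V : Type*} [Fintype V] [DecidableEq V] (E : Finset (V × V)) (i j : V) :
    j ∈ inNbrs E i ↔ (j, i) ∈ E := by simp [inNbrs]

def proj (S : Finset (Fin (n + 1))) : Finset (Fin n) :=
  Finset.univ.filter (fun i => Fin.castSucc i ∈ S)

lemma mem_proj {S : Finset (Fin (n + 1))} {i : Fin n} :
    i ∈ proj S ↔ Fin.castSucc i ∈ S := by simp [proj]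

lemma image_proj (S : Finset (Fin (n + 1))) :
    (proj S).image Fin.castSucc = S.erase (Fin.last n) := by
  ext a
  simp only [Finset.mem_image, mem_proj, Finset.mem_erase]
  constructor
  · rintro ⟨i, hi, rfl⟩
    exact ⟨(Fin.castSucc_lt_last i).ne, hi⟩
  · rintro ⟨hne, ha⟩
    obtain ⟨i, rfl⟩ := Fin.exists_castSucc_eq.mpr hne
    exact ⟨i, ha, rfl⟩

lemma card_proj (S : Finset (Fin (n + 1))) :
    (proj S).card = (S.erase (Fin.last n)).card := by
  rw [← image_proj, Finset.card_image_of_injective _ (Fin.castSucc_injective n)]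

lemma proj_nonempty {S : Finset (Fin (n + 1))} {a : Fin (n + 1)} (ha : a ∈ S)
    (hne : a ≠ Fin.last n) : (proj S).Nonempty := by
  obtain ⟨i, rfl⟩ := Fin.exists_castSucc_eq.mpr hne
  exact ⟨i, mem_proj.mpr ha⟩

lemma proj_disjoint {S1 S2 : Finset (Fin (n + 1))} (h : Disjoint S1 S2) :
    Disjoint (proj S1) (proj S2) := by
  rw [Finset.disjoint_left] at h ⊢
  intro i hi1 hi2
  exact h (mem_proj.mp hi1) (mem_proj.mp hi2)

variable {E1 : Finset (Fin n × Fin n)} {E2 : Finset (Fin (n + 1) × Fin (n + 1))}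
  (hrestr : ∀ i j : Fin n, (Fin.castSucc i, Fin.castSucc j) ∈ E2 ↔ (i, j) ∈ E1)

include hrestr in
lemma reach_image_subset (S : Finset (Fin (n + 1))) :
    (reachSet E1 r (proj S)).image Fin.castSucc ⊆ reachSet E2 r S := by
  intro a ha
  obtain ⟨i, hi, rfl⟩ := Finset.mem_image.mp ha
  rw [reachSet, Finset.mem_filter] at hi ⊢
  refine ⟨mem_proj.mp hi.1, ?_⟩
  have hsub : (inNbrs E1 i \ proj S).image Fin.castSucc ⊆ inNbrs E2 (Fin.castSucc i) \ S := by
    intro b hb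
    obtain ⟨j, hj, rfl⟩ := Finset.mem_image.mp hb
    rw [Finset.mem_sdiff] at hj ⊢
    refine ⟨(mem_inNbrs _ _ _).mpr ((hrestr j i).mpr ((mem_inNbrs _ _ _).mp hj.1)), ?_⟩
    exact fun h => hj.2 (mem_proj.mpr h)
  calc r ≤ (inNbrs E1 i \ proj S).card := hi.2
    _ = ((inNbrs E1 i \ proj S).image Fin.castSucc).card :=
        (Finset.card_image_of_injective _ (Fin.castSucc_injective n)).symm
    _ ≤ _ := Finset.card_le_card hsub

include hrestr in
lemma reach_card_le (S : Finset (Fin (n + 1))) :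
    (reachSet E1 r (proj S)).card ≤ (reachSet E2 r S).card := by
  rw [← Finset.card_image_of_injective (reachSet E1 r (proj S)) (Fin.castSucc_injective n)]
  exact Finset.card_le_card (reach_image_subset hrestr S)

include hrestr in
lemma reach_full_transfer {S : Finset (Fin (n + 1))} (hv : Fin.last n ∉ S)
    (h : (reachSet E1 r (proj S)).card = (proj S).card) :
    (reachSet E2 r S).card = S.card := by
  have h1 : (proj S).card = S.card := by
    rw [card_proj, Finset.erase_eq_of_notMem hv]
  refine le_antisymm (Finset.card_le_card (Finset.filter_subset _ _)) ?_
  calc S.card = (reachSet E1 r (proj S)).card := by rw [h, h1]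
    _ ≤ _ := reach_card_le hrestr S

include hrestr in
lemma step (hs1 : 1 ≤ s)
    (hsimple : (Fin.last n, Fin.last n) ∉ E2)
    (hdeg : r + s - 1 ≤ (inNbrs E2 (Fin.last n)).card)
    (hrob : RSRobust E1 r s) : RSRobust E2 r s := by
  have hvnotin : Fin.last n ∉ inNbrs E2 (Fin.last n) := by
    rw [mem_inNbrs]; exact hsimple
  -- main auxiliary: handle the case where the new vertex is in the first set
  have key : ∀ S1 S2 : Finset (Fin (n + 1)), S1.Nonempty → S2.Nonempty → Disjoint S1 S2 →
      Fin.last n ∈ S1 →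
      (reachSet E2 r S1).card = S1.card ∨ (reachSet E2 r S2).card = S2.card ∨
        s ≤ (reachSet E2 r S1).card + (reachSet E2 r S2).card := by
    intro S1 S2 h1 h2 hdisj hv1
    have hv2 : Fin.last n ∉ S2 := fun h => (Finset.disjoint_left.mp hdisj hv1) h
    by_cases hsingle : S1 = {Fin.last n}
    · -- S1 = {v}: v has all of its ≥ r+s-1 ≥ r in-neighbors outside S1
      left
      subst hsingle
      have hv : Fin.last n ∈ reachSet E2 r {Fin.last n} := by
        rw [reachSet, Finset.mem_filter]
        refine ⟨Finset.mem_singleton_self _, ?_⟩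
        have heq : inNbrs E2 (Fin.last n) \ {Fin.last n} = inNbrs E2 (Fin.last n) :=
          Finset.sdiff_eq_self_iff_disjoint.mpr (Finset.disjoint_singleton_right.mpr hvnotin)
        rw [heq]; omega
      have heq : reachSet E2 r {Fin.last n} = {Fin.last n} :=
        Finset.Subset.antisymm (Finset.filter_subset _ _) (Finset.singleton_subset_iff.mpr hv)
      rw [heq]
    · -- S1 has an element other than v
      have hcard1 : 2 ≤ S1.card := by
        by_contra h
        push_neg at h
        have hpos : 1 ≤ S1.card := Finset.card_pos.mpr ⟨_, hv1⟩
        have hS : S1.card = 1 := by omega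
        obtain ⟨x, hx⟩ := Finset.card_eq_one.mp hS
        rw [hx, Finset.mem_singleton] at hv1
        exact hsingle (hv1 ▸ hx)
      have hproj1 : (proj S1).Nonempty := by
        have := Finset.exists_mem_ne (by omega : 1 < S1.card) (Fin.last n)
        obtain ⟨a, ha, hane⟩ := this
        exact proj_nonempty ha hane
      obtain ⟨b, hb⟩ := h2
      have hproj2 : (proj S2).Nonempty := proj_nonempty hb (fun h => hv2 (h ▸ hb))
      have hcp1 : (proj S1).card = S1.card - 1 := by
        rw [card_proj, Finset.card_erase_of_mem hv1]
      have hcp2 : (proj S2).card = S2.card := by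
        rw [card_proj, Finset.erase_eq_of_notMem hv2]
      rcases hrob (proj S1) (proj S2) hproj1 hproj2 (proj_disjoint hdisj) with hc1 | hc2 | hc3
      · -- all of S1 \ {v} reaches; check whether v reaches too
        by_cases hvreach : r ≤ (inNbrs E2 (Fin.last n) \ S1).card
        · -- v also reaches: condition (i) holds for S1
          left
          have hvR : Fin.last n ∈ reachSet E2 r S1 := by
            rw [reachSet, Finset.mem_filter]; exact ⟨hv1, hvreach⟩
          have himg : insert (Fin.last n) ((reachSet E1 r (proj S1)).image Fin.castSucc)
              ⊆ reachSet E2 r S1 := by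
            rw [Finset.insert_subset_iff]
            exact ⟨hvR, reach_image_subset hrestr S1⟩
          have hnm : Fin.last n ∉ (reachSet E1 r (proj S1)).image Fin.castSucc := by
            rw [Finset.mem_image]
            rintro ⟨i, _, hi⟩
            exact (Fin.castSucc_lt_last i).ne hi
          have hle : S1.card ≤ (reachSet E2 r S1).card := by
            calc S1.card = (reachSet E1 r (proj S1)).card + 1 := by
                  rw [hc1, hcp1]; omega
              _ = ((reachSet E1 r (proj S1)).image Fin.castSucc).card + 1 := by
                  rw [Finset.card_image_of_injective _ (Fin.castSucc_injective n)]
              _ = (insert (Fin.last n) ((reachSet E1 r (proj S1)).image Fin.castSucc)).card := by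
                  rw [Finset.card_insert_of_notMem hnm]
              _ ≤ _ := Finset.card_le_card himg
          exact le_antisymm (Finset.card_le_card (Finset.filter_subset _ _)) hle
        · -- v does not reach: then at least s in-neighbors of v lie in S1 \ {v}
          right; right
          have hsplit : (inNbrs E2 (Fin.last n) \ S1).card
              + (inNbrs E2 (Fin.last n) ∩ S1).card = (inNbrs E2 (Fin.last n)).card :=
            Finset.card_sdiff_add_card_inter _ _
          have hinter : s ≤ (inNbrs E2 (Fin.last n) ∩ S1).card := by omega
          have hsub : inNbrs E2 (Fin.last n) ∩ S1 ⊆ S1.erase (Fin.last n) := by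
            intro x hx
            rw [Finset.mem_inter] at hx
            rw [Finset.mem_erase]
            exact ⟨fun h => hvnotin (h ▸ hx.1), hx.2⟩
          have hS1e : s ≤ (S1.erase (Fin.last n)).card :=
            le_trans hinter (Finset.card_le_card hsub)
          have : s ≤ (reachSet E2 r S1).card := by
            calc s ≤ (S1.erase (Fin.last n)).card := hS1e
              _ = (proj S1).card := (card_proj S1).symm
              _ = (reachSet E1 r (proj S1)).card := hc1.symm
              _ ≤ _ := reach_card_le hrestr S1
          omega
      · right; left
        exact reach_full_transfer hrestr hv2 hc2
      · right; right
        have g1 := reach_card_le (r := r) hrestr S1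
        have g2 := reach_card_le (r := r) hrestr S2
        omega
  intro S1 S2 h1 h2 hdisj
  by_cases hv1 : Fin.last n ∈ S1
  · exact key S1 S2 h1 h2 hdisj hv1
  by_cases hv2 : Fin.last n ∈ S2
  · rcases key S2 S1 h2 h1 hdisj.symm hv2 with h | h | h
    · right; left; exact h
    · left; exact h
    · right; right; omega
  · -- neither set contains the new vertex
    obtain ⟨a, ha⟩ := h1
    obtain ⟨b, hb⟩ := h2
    have hproj1 : (proj S1).Nonempty := proj_nonempty ha (fun h => hv1 (h ▸ ha))
    have hproj2 : (proj S2).Nonempty := proj_nonempty hb (fun h => hv2 (h ▸ hb))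
    rcases hrob (proj S1) (proj S2) hproj1 hproj2 (proj_disjoint hdisj) with hc | hc | hc
    · left; exact reach_full_transfer hrestr hv1 hc
    · right; left; exact reach_full_transfer hrestr hv2 hc
    · right; right
      have g1 := reach_card_le (r := r) hrestr S1
      have g2 := reach_card_le (r := r) hrestr S2
      omega

end Stmt19Aux

/-- `(r,s)`-robustness is preserved under repeatedly attaching a new vertex with at least
`r + s - 1` in-neighbors among the existing vertices (e.g. preferential attachment).
Here `E k` is the edge set of the digraph `D_k` on `n0 + k` vertices; `D_{k+1}` agrees
with `D_k` on the old vertices, and the new vertex `Fin.last (n0 + k)` has in-degree at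
least `r + s - 1` in `D_{k+1}`. -/
theorem stmt19 (n0 r s K : ℕ) (hn : 2 ≤ n0) (hs1 : 1 ≤ s) (hsn : s ≤ n0)
    (E : ∀ k : ℕ, Finset (Fin (n0 + k) × Fin (n0 + k)))
    (hsimple : ∀ k, ∀ i : Fin (n0 + k), (i, i) ∉ E k)
    (hrob0 : RSRobust (E 0) r s)
    (hrestr : ∀ k, ∀ i j : Fin (n0 + k),
      (Fin.castSucc i, Fin.castSucc j) ∈ E (k + 1) ↔ (i, j) ∈ E k)
    (hdeg : ∀ k, r + s - 1 ≤ (inNbrs (E (k + 1)) (Fin.last (n0 + k))).card) :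
    ∀ k ≤ K, RSRobust (E k) r s := by
  have main : ∀ k, RSRobust (E k) r s := by
    intro k
    induction k with
    | zero => exact hrob0
    | succ k ih =>
      exact Stmt19Aux.step (hrestr k) hs1 (hsimple (k + 1) (Fin.last (n0 + k)))
        (hdeg k) ih
  exact fun k _ => main k
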